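/- Define f₀, f₁, f₂ : ℂ² → ℂ³ by f₀(z,w) = (z², √2·zw, w²), f₁(z,w) = (−√2·z·conj w, z·conj z − w·conj w, √2·w·conj z), f₂(z,w) = ((conj w)², −√2·conj z·conj w, (conj z)²). Then for every (z,w) ∈ S³, the vectors f₀(z,w), f₁(z,w), f₂(z,w) form a unitary (orthonormal) basis of ℂ³ with respect to the standard Hermitian inner product. -/

import Mathlib

open Matrix

/-- An element of `ℂ³` (with its standard Hermitian inner product) given by coordinates. -/
noncomputable def vecE3 (a b c : ℂ) : EuclideanSpace ℂ (Fin 3) :=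
  (WithLp.equiv 2 (Fin 3 → ℂ)).symm ![a, b, c]

/-- `f₀(z,w) = (z², √2 zw, w²)`. -/
noncomputable def f₀ (p : ℂ × ℂ) : EuclideanSpace ℂ (Fin 3) :=
  vecE3 (p.1 ^ 2) ((Real.sqrt 2 : ℂ) * p.1 * p.2) (p.2 ^ 2)

/-- `f₁(z,w) = (−√2 z w̄, z z̄ − w w̄, √2 w z̄)`. -/
noncomputable def f₁ (p : ℂ × ℂ) : EuclideanSpace ℂ (Fin 3) :=
  vecE3 (-((Real.sqrt 2 : ℂ) * p.1 * (starRingEnd ℂ) p.2))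
    (p.1 * (starRingEnd ℂ) p.1 - p.2 * (starRingEnd ℂ) p.2)
    ((Real.sqrt 2 : ℂ) * p.2 * (starRingEnd ℂ) p.1)

/-- `f₂(z,w) = (w̄², −√2 z̄ w̄, z̄²)`. -/
noncomputable def f₂ (p : ℂ × ℂ) : EuclideanSpace ℂ (Fin 3) :=
  vecE3 (((starRingEnd ℂ) p.2) ^ 2)
    (-((Real.sqrt 2 : ℂ) * (starRingEnd ℂ) p.1 * (starRingEnd ℂ) p.2))
    (((starRingEnd ℂ) p.1) ^ 2)

/-- At every point of `S³`, the vectors `f₀, f₁, f₂` form a unitary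
(orthonormal) basis of `ℂ³` for the standard Hermitian inner product. -/
theorem f_frame_unitary (p : ℂ × ℂ) (hp : ‖p.1‖ ^ 2 + ‖p.2‖ ^ 2 = 1) :
    Orthonormal ℂ ![f₀ p, f₁ p, f₂ p] ∧
    Submodule.span ℂ (Set.range ![f₀ p, f₁ p, f₂ p]) = ⊤ := by
  have key : ∀ z : ℂ, (starRingEnd ℂ) z * z = ((‖z‖ ^ 2 : ℝ) : ℂ) := by
    intro z
    rw [mul_comm, Complex.mul_conj]
    norm_cast
    rw [← Complex.sq_norm]
  have hc : (starRingEnd ℂ) p.1 * p.1 + (starRingEnd ℂ) p.2 * p.2 = 1 := by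
    rw [key, key, ← Complex.ofReal_add, hp, Complex.ofReal_one]
  have hs : ((Real.sqrt 2 : ℂ)) ^ 2 = 2 := by
    rw [← Complex.ofReal_pow, Real.sq_sqrt (by norm_num)]; norm_num
  have horth : Orthonormal ℂ ![f₀ p, f₁ p, f₂ p] := by
    rw [orthonormal_iff_ite]
    intro i j
    fin_cases i <;> fin_cases j <;>
      simp [f₀, f₁, f₂, vecE3, PiLp.inner_apply, RCLike.inner_apply,
        Fin.sum_univ_three, _root_.map_mul, map_pow, Complex.conj_conj, map_neg, map_sub,
        Complex.conj_ofReal, -inner_self_eq_norm_sq_to_K]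
    all_goals try ring
    · linear_combination ((starRingEnd ℂ) p.1 * p.1 + (starRingEnd ℂ) p.2 * p.2 + 1) * hc +
        ((starRingEnd ℂ) p.1 * p.1) * ((starRingEnd ℂ) p.2 * p.2) * hs
    · linear_combination (-((starRingEnd ℂ) p.1 ^ 2 * (starRingEnd ℂ) p.2 ^ 2)) * hs
    · linear_combination ((starRingEnd ℂ) p.1 * p.1 + (starRingEnd ℂ) p.2 * p.2 + 1) * hc +
        2 * ((starRingEnd ℂ) p.1 * p.1) * ((starRingEnd ℂ) p.2 * p.2) * hs
    · linear_combination (-(p.1 ^ 2 * p.2 ^ 2)) * hs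
    · linear_combination ((starRingEnd ℂ) p.1 * p.1 + (starRingEnd ℂ) p.2 * p.2 + 1) * hc +
        ((starRingEnd ℂ) p.1 * p.1) * ((starRingEnd ℂ) p.2 * p.2) * hs
  refine ⟨horth, horth.linearIndependent.span_eq_top_of_card_eq_finrank ?_⟩
  simp
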